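/- The shredding operation SHR is a bijection from the class of σ-interpretations to the class of redundancy-free σs-interpretations satisfying Wellformed(σs), whose inverse is the unshredding operation. -/

import Mathlib

/-- A relational signature: relation names with arities. -/
structure Sig : Type 1 where
  Rel : Type
  ar : Rel → ℕ

/-- An interpretation of a signature: a domain and, for each relation,
a set of tuples (lists of the right length). -/
structure Interp (σ : Sig) : Type 1 where
  Dom : Type
  rel : σ.Rel → Set (List Dom)
  wf : ∀ R l, l ∈ rel R → l.length = σ.ar R

/-- An atom over variables `V`. -/
structure Atom (σ : Sig) (V : Type) where
  R : σ.Rel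
  args : Fin (σ.ar R) → V

/-- A conjunction of atoms over variables `V`. -/
abbrev Conj (σ : Sig) (V : Type) := List (Atom σ V)

def Atom.vmap {σ : Sig} {V W : Type} (f : V → W) (A : Atom σ V) : Atom σ W :=
  ⟨A.R, f ∘ A.args⟩

def Conj.vmap {σ : Sig} {V W : Type} (f : V → W) (Φ : Conj σ V) : Conj σ W :=
  Φ.map (Atom.vmap f)

def satAtom {σ : Sig} (I : Interp σ) {V : Type} (ν : V → I.Dom) (A : Atom σ V) : Prop :=
  (List.ofFn fun i => ν (A.args i)) ∈ I.rel A.R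

def satConj {σ : Sig} (I : Interp σ) {V : Type} (ν : V → I.Dom) (Φ : Conj σ V) : Prop :=
  ∀ A ∈ Φ, satAtom I ν A

/-- A variable occurs in an atom. -/
def occursIn {σ : Sig} {V : Type} (v : V) (A : Atom σ V) : Prop := ∃ i, A.args i = v

/-- The Gaifman graph of a conjunction of atoms. -/
def gaifmanC {σ : Sig} {V : Type} (Φ : Conj σ V) : SimpleGraph V where
  Adj u v := u ≠ v ∧ ∃ A ∈ Φ, occursIn u A ∧ occursIn v A
  symm := by
    constructor
    intro u v h
    exact ⟨h.1.symm, by obtain ⟨A, hA, h1, h2⟩ := h.2; exact ⟨A, hA, h2, h1⟩⟩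
  loopless := by constructor; intro v h; exact h.1 rfl

/-- The Gaifman graph of an interpretation. -/
def gaifmanI {σ : Sig} (I : Interp σ) : SimpleGraph I.Dom where
  Adj a b := a ≠ b ∧ ∃ R l, l ∈ I.rel R ∧ a ∈ l ∧ b ∈ l
  symm := by
    constructor
    intro a b h
    exact ⟨h.1.symm, by obtain ⟨R, l, hl, h1, h2⟩ := h.2; exact ⟨R, l, hl, h2, h1⟩⟩
  loopless := by constructor; intro a h; exact h.1 rfl

/-- The relation names of the shredded signature. -/
inductive SRel (σ : Sig) : Type
  | low (R : σ.Rel) (h : σ.ar R ≤ 2)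
  | elt
  | tag (R : σ.Rel) (h : 2 < σ.ar R)
  | proj (R : σ.Rel) (h : 2 < σ.ar R) (i : Fin (σ.ar R))

/-- The shredded signature σs. -/
def sSig (σ : Sig) : Sig where
  Rel := SRel σ
  ar := fun r => match r with
    | .low R _ => σ.ar R
    | .elt => 1
    | .tag _ _ => 1
    | .proj _ _ _ => 2

/-- Shredding of an atom (with the fresh tuple variable `t`). -/
def shredAtom {σ : Sig} {V T : Type} (A : Atom σ V) (t : T) : Conj (sSig σ) (V ⊕ T) :=
  if h : σ.ar A.R ≤ 2 then
    [⟨SRel.low A.R h, fun i => Sum.inl (A.args i)⟩]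
  else
    ⟨SRel.tag A.R (lt_of_not_ge h), fun _ => Sum.inr t⟩ ::
    (List.finRange (σ.ar A.R)).map (fun i =>
      ⟨SRel.proj A.R (lt_of_not_ge h) i,
       fun j => if j.val = 0 then Sum.inr t else Sum.inl (A.args i)⟩)

/-- Shredding of a conjunction of atoms: one fresh variable per atom. -/
def shredConj {σ : Sig} {V : Type} (Φ : Conj σ V) : Conj (sSig σ) (V ⊕ Fin Φ.length) :=
  (List.finRange Φ.length).flatMap (fun k => shredAtom (Φ.get k) k)

/-- The fresh elements of the shredding of an interpretation: one per higher-arity tuple. -/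
def HighTuple {σ : Sig} (I : Interp σ) : Type :=
  Σ R : σ.Rel, {l : List I.Dom // l ∈ I.rel R ∧ 2 < σ.ar R}

/-- The shredding of an interpretation. -/
def shredInterp {σ : Sig} (I : Interp σ) : Interp (sSig σ) where
  Dom := I.Dom ⊕ HighTuple I
  rel := fun r => match r with
    | .low R _ => {l | ∃ l₀ ∈ I.rel R, l = l₀.map Sum.inl}
    | .elt => {l | ∃ a : I.Dom, l = [Sum.inl a]}
    | .tag R _ => {l | ∃ t : HighTuple I, t.1 = R ∧ l = [Sum.inr t]}
    | .proj R _ i => {l | ∃ t : HighTuple I, t.1 = R ∧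
        ∃ a : I.Dom, t.2.val[i.val]? = some a ∧ l = [Sum.inr t, Sum.inl a]}
  wf := by
    rintro r l hl
    cases r with
    | low R h => obtain ⟨l₀, h₀, rfl⟩ := hl; simpa [sSig] using I.wf R l₀ h₀
    | elt => obtain ⟨a, rfl⟩ := hl; rfl
    | tag R h => obtain ⟨t, _, rfl⟩ := hl; rfl
    | proj R h i => obtain ⟨t, _, a, _, rfl⟩ := hl; rfl

/-- Homomorphisms of interpretations. -/
def IsHom {σ : Sig} (I I' : Interp σ) (h : I.Dom → I'.Dom) : Prop :=
  ∀ R l, l ∈ I.rel R → l.map h ∈ I'.rel R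

/-- Existential rules: body over variables `B`, head over `B ⊕ E`
(`B`-variables occurring in the head are the frontier). -/
structure ExRule (σ : Sig) : Type 1 where
  B : Type
  E : Type
  body : Conj σ B
  head : Conj σ (B ⊕ E)

def satRule {σ : Sig} (I : Interp σ) (τ : ExRule σ) : Prop :=
  ∀ ν : τ.B → I.Dom, satConj I ν τ.body →
    ∃ μ : τ.E → I.Dom, satConj I (Sum.elim ν μ) τ.head

/-- Shredding of an existential rule. -/
def shredRule {σ : Sig} (τ : ExRule σ) : ExRule (sSig σ) where
  B := τ.B ⊕ Fin τ.body.length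
  E := τ.E ⊕ Fin τ.head.length
  body := shredConj τ.body
  head := (shredConj τ.head).vmap
    (Sum.elim (Sum.elim (Sum.inl ∘ Sum.inl) (Sum.inr ∘ Sum.inl)) (fun k => Sum.inr (Sum.inr k)))

/-- The `Elt`-elements of a σs-interpretation. -/
def EltDom {σ : Sig} (J : Interp (sSig σ)) : Type :=
  {a : J.Dom // [a] ∈ J.rel SRel.elt}

/-- The unshredding of a σs-interpretation. -/
def unshred {σ : Sig} (J : Interp (sSig σ)) : Interp σ where
  Dom := EltDom J
  rel := fun R =>
    if h : σ.ar R ≤ 2 then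
      {l | l.length = σ.ar R ∧ l.map Subtype.val ∈ J.rel (SRel.low R h)}
    else
      {l | ∃ hl : l.length = σ.ar R, ∃ t : J.Dom,
        [t] ∈ J.rel (SRel.tag R (lt_of_not_ge h)) ∧
        ∀ i : Fin (σ.ar R),
          [t, (l.get (Fin.cast hl.symm i)).val] ∈ J.rel (SRel.proj R (lt_of_not_ge h) i)}
  wf := by
    intro R l hl
    by_cases h : σ.ar R ≤ 2
    · rw [dif_pos h] at hl; exact hl.1
    · rw [dif_neg h] at hl; exact hl.1

/-- The structural conditions satisfied by shreddings (`Wellformed(σs)`). -/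
def WellFormed {σ : Sig} (J : Interp (sSig σ)) : Prop :=
  (∀ (R : σ.Rel) (h : 2 < σ.ar R) (a : J.Dom),
      [a] ∈ J.rel (SRel.tag R h) → [a] ∉ J.rel SRel.elt) ∧
  (∀ (R : σ.Rel) (h : 2 < σ.ar R) (R' : σ.Rel) (h' : 2 < σ.ar R') (a : J.Dom),
      [a] ∈ J.rel (SRel.tag R h) → [a] ∈ J.rel (SRel.tag R' h') → R = R') ∧
  (∀ a : J.Dom, [a] ∈ J.rel SRel.elt ∨ ∃ (R : σ.Rel) (h : 2 < σ.ar R), [a] ∈ J.rel (SRel.tag R h)) ∧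
  (∀ (R : σ.Rel) (h : 2 < σ.ar R) (i : Fin (σ.ar R)) (t a : J.Dom),
      [t, a] ∈ J.rel (SRel.proj R h i) →
        [t] ∈ J.rel (SRel.tag R h) ∧ [a] ∈ J.rel SRel.elt) ∧
  (∀ (R : σ.Rel) (h : 2 < σ.ar R) (t : J.Dom), [t] ∈ J.rel (SRel.tag R h) →
      ∀ i : Fin (σ.ar R), ∃! a : J.Dom, [t, a] ∈ J.rel (SRel.proj R h i)) ∧
  (∀ (R : σ.Rel) (h : σ.ar R ≤ 2) (l : List J.Dom), l ∈ J.rel (SRel.low R h) →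
      ∀ a ∈ l, [a] ∈ J.rel SRel.elt)

/-- Redundancy-freeness: no two distinct tuple-elements code the same tuple. -/
def RedundancyFree {σ : Sig} (J : Interp (sSig σ)) : Prop :=
  ∀ (R : σ.Rel) (h : 2 < σ.ar R) (t t' : J.Dom) (f : Fin (σ.ar R) → J.Dom),
    (∀ i, [t, f i] ∈ J.rel (SRel.proj R h i) ∧ [t', f i] ∈ J.rel (SRel.proj R h i)) → t = t'

/-- Isomorphism of interpretations. -/
structure InterpIso {σ : Sig} (I I' : Interp σ) where
  e : I.Dom ≃ I'.Dom
  hrel : ∀ R l, l ∈ I.rel R ↔ l.map e ∈ I'.rel R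

/-- GC²: the guarded two-variable fragment with counting quantifiers
(atoms have arity ≤ 2; guards of counting quantifiers use both variables). -/
inductive GC2 (σ : Sig) : Type
  | atom (R : σ.Rel) (har : σ.ar R ≤ 2) (args : Fin (σ.ar R) → Fin 2)
  | eq (v w : Fin 2)
  | neg (φ : GC2 σ)
  | conj (φ ψ : GC2 σ)
  | count (v : Fin 2) (n : ℕ) (R : σ.Rel) (har : σ.ar R ≤ 2)
      (gargs : Fin (σ.ar R) → Fin 2) (hg : ∀ w : Fin 2, ∃ i, gargs i = w)
      (φ : GC2 σ)

def GC2.eval {σ : Sig} (I : Interp σ) : GC2 σ → (Fin 2 → I.Dom) → Prop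
  | .atom R _ args, ν => (List.ofFn fun i => ν (args i)) ∈ I.rel R
  | .eq v w, ν => ν v = ν w
  | .neg φ, ν => ¬ φ.eval I ν
  | .conj φ ψ, ν => φ.eval I ν ∧ ψ.eval I ν
  | .count v n R _ gargs _ φ, ν =>
      ∃ s : Finset I.Dom, n ≤ s.card ∧ ∀ b ∈ s,
        ((List.ofFn fun i => Function.update ν v b (gargs i)) ∈ I.rel R) ∧
        φ.eval I (Function.update ν v b)

def GC2.size {σ : Sig} : GC2 σ → ℕ
  | .atom _ _ _ => 1
  | .eq _ _ => 1
  | .neg φ => φ.size + 1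
  | .conj φ ψ => φ.size + ψ.size + 1
  | .count _ _ _ _ _ _ φ => φ.size + 1

/-- A GC² theory holds in an interpretation (formulas read universally closed). -/
def satTheory {σ : Sig} (I : Interp σ) (Θ : Set (GC2 σ)) : Prop :=
  ∀ φ ∈ Θ, ∀ ν : Fin 2 → I.Dom, φ.eval I ν


section AuxShred
variable {σ : Sig}


lemma unshred_rel_low {J : Interp (sSig σ)} {R : σ.Rel} (h : σ.ar R ≤ 2)
    (l : List (EltDom J)) :
    l ∈ (unshred J).rel R ↔
      (l.length = σ.ar R ∧ l.map Subtype.val ∈ J.rel (SRel.low R h)) := by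
  simp only [unshred, dif_pos h, Set.mem_setOf_eq]; exact Iff.rfl

lemma unshred_rel_high {J : Interp (sSig σ)} {R : σ.Rel} (h : ¬ σ.ar R ≤ 2)
    (l : List (EltDom J)) :
    l ∈ (unshred J).rel R ↔
      ∃ hl : l.length = σ.ar R, ∃ t : J.Dom,
        [t] ∈ J.rel (SRel.tag R (lt_of_not_ge h)) ∧
        ∀ i : Fin (σ.ar R),
          [t, (l.get (Fin.cast hl.symm i)).val] ∈ J.rel (SRel.proj R (lt_of_not_ge h) i) := by
  simp only [unshred, dif_neg h, Set.mem_setOf_eq]; exact Iff.rfl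

lemma exists_map_inl {α β : Type} (l : List (α ⊕ β)) (h : ∀ x ∈ l, ∃ y, x = Sum.inl y) :
    ∃ l₀ : List α, l = l₀.map Sum.inl := by
  induction l with
  | nil => exact ⟨[], rfl⟩
  | cons x xs ih =>
    obtain ⟨y, rfl⟩ := h x (List.mem_cons_self)
    obtain ⟨l₀, rfl⟩ := ih fun x hx => h x (List.mem_cons_of_mem _ hx)
    exact ⟨y :: l₀, rfl⟩

lemma cons_inj1 {α : Type} {a b : α} (h : [a] = [b]) : a = b := by simpa using h

lemma cons_inj2 {α : Type} {a b c d : α} (h : [a, b] = [c, d]) : a = c ∧ b = d := by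
  simpa using h

lemma len_eq {α β : Type} (f : α → β) (l : List α) {n : ℕ} (h : (l.map f).length = n) :
    l.length = n := by simpa using h

lemma wf_shred (I : Interp σ) : WellFormed (shredInterp I) := by
  refine ⟨?_, ?_, ?_, ?_, ?_, ?_⟩
  · rintro R h a ⟨t, _, ht⟩ ⟨b, hb⟩
    rw [ht] at hb; simp at hb
  · rintro R h R' h' a ⟨t, h1, ht⟩ ⟨t', h1', ht'⟩
    rw [ht] at ht'
    simp only [List.cons.injEq, and_true] at ht'
    obtain rfl := Sum.inr_injective ht'
    rw [← h1, ← h1']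
  · rintro (a | t)
    · exact Or.inl ⟨a, rfl⟩
    · exact Or.inr ⟨t.1, t.2.2.2, t, rfl, rfl⟩
  · rintro R h i t a ⟨t₀, h1, a₀, hg, hl⟩
    replace hl := cons_inj2 hl
    rw [hl.1, hl.2]
    exact ⟨⟨t₀, h1, rfl⟩, ⟨a₀, rfl⟩⟩
  · rintro R h t ⟨t₀, h1, ht⟩ i
    replace ht := cons_inj1 ht
    subst ht
    have hlen : t₀.2.val.length = σ.ar R := by
      rw [I.wf t₀.1 t₀.2.val t₀.2.2.1, h1]
    have hi : (i : ℕ) < t₀.2.val.length := by omega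
    refine ⟨Sum.inl (t₀.2.val.get ⟨i, hi⟩), ⟨t₀, h1, _, List.getElem?_eq_getElem hi, rfl⟩, ?_⟩
    rintro b ⟨t₁, -, a₁, hg1, hb⟩
    replace hb := cons_inj2 hb
    obtain ⟨ht₁, hb1⟩ := hb
    obtain rfl := Sum.inr_injective ht₁
    subst hb1
    rw [List.getElem?_eq_getElem hi] at hg1
    simp only [Option.some.injEq] at hg1
    exact congrArg Sum.inl hg1.symm
  · rintro R h l ⟨l₀, -, rfl⟩ a ha
    replace ha := List.mem_map.mp ha
    obtain ⟨a₀, -, rfl⟩ := ha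
    exact ⟨a₀, rfl⟩

lemma rf_shred (I : Interp σ) : RedundancyFree (shredInterp I) := by
  rintro R h t t' f hf
  have i0 : Fin (σ.ar R) := ⟨0, by omega⟩
  obtain ⟨⟨t₀, hR₀, a₀, -, hl₀⟩, ⟨t₀', hR₀', a₀', -, hl₀'⟩⟩ := hf i0
  replace hl₀ := cons_inj2 hl₀; replace hl₀' := cons_inj2 hl₀'
  rw [hl₀.1, hl₀'.1]
  congr 1
  have key : ∀ i : Fin (σ.ar R), t₀.2.val[(i : ℕ)]? = t₀'.2.val[(i : ℕ)]? := by
    intro i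
    obtain ⟨⟨t₁, -, a₁, hg1, hl1⟩, ⟨t₁', -, a₁', hg1', hl1'⟩⟩ := hf i
    rw [hl₀.1] at hl1
    rw [hl₀'.1] at hl1'
    replace hl1 := cons_inj2 hl1; replace hl1' := cons_inj2 hl1'
    obtain ⟨h01, hfi⟩ := hl1
    obtain ⟨h01', hfi'⟩ := hl1'
    obtain rfl := Sum.inr_injective h01
    obtain rfl := Sum.inr_injective h01'
    rw [hfi] at hfi'
    rw [hg1, hg1', Sum.inl_injective hfi']
  have hlen : t₀.2.val.length = σ.ar R := by rw [I.wf _ _ t₀.2.2.1, hR₀]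
  have hlen' : t₀'.2.val.length = σ.ar R := by rw [I.wf _ _ t₀'.2.2.1, hR₀']
  obtain ⟨R₀, l₀⟩ := t₀
  obtain ⟨R₀', l₀'⟩ := t₀'
  dsimp only at hR₀ hR₀' key hlen hlen'
  subst hR₀
  subst hR₀'
  have hv : l₀ = l₀' := by
    apply Subtype.ext
    apply List.ext_get (by omega)
    intro n h1 h2
    have := key ⟨n, by omega⟩
    rw [List.getElem?_eq_getElem h1, List.getElem?_eq_getElem h2] at this
    simpa using this
  rw [hv]

lemma iso1 (I : Interp σ) : Nonempty (InterpIso (unshred (shredInterp I)) I) := by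
  classical
  set f : I.Dom → EltDom (shredInterp I) := fun a => ⟨Sum.inl a, ⟨a, rfl⟩⟩ with hf
  have hbij : Function.Bijective f := by
    constructor
    · intro a b hab
      exact Sum.inl_injective (congrArg Subtype.val hab)
    · rintro ⟨x, hx⟩
      obtain ⟨a, ha⟩ := hx
      replace ha := cons_inj1 ha
      exact ⟨a, Subtype.ext ha.symm⟩
  set e := (Equiv.ofBijective f hbij).symm with he
  have hkey : ∀ x : EltDom (shredInterp I), x.val = Sum.inl (e x) := by
    intro x
    have : f (e x) = x := (Equiv.ofBijective f hbij).apply_symm_apply x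
    exact (congrArg Subtype.val this).symm
  have hmap : ∀ l : List (EltDom (shredInterp I)),
      l.map Subtype.val = (l.map e).map Sum.inl := by
    intro l
    rw [List.map_map]
    exact List.map_congr_left fun x _ => hkey x
  refine ⟨⟨e, ?_⟩⟩
  intro R l
  show l ∈ (unshred (shredInterp I)).rel R ↔
    @List.map (EltDom (shredInterp I)) I.Dom (⇑e) l ∈ I.rel R
  by_cases h : σ.ar R ≤ 2
  · refine (unshred_rel_low h l).trans ?_
    constructor
    · rintro ⟨hlen, l₀, hl₀, hm⟩
      erw [hmap] at hm
      convert hl₀ using 1; exact List.map_injective_iff.mpr Sum.inl_injective hm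
    · intro hm
      refine ⟨len_eq _ _ (I.wf R _ hm), l.map e, hm, hmap l⟩
  · refine (unshred_rel_high h l).trans ?_
    constructor
    · rintro ⟨hl, t, ⟨t₀, hR₀, ht⟩, hproj⟩
      replace ht := cons_inj1 ht
      subst ht
      have hlen : t₀.2.val.length = σ.ar R := by rw [I.wf _ _ t₀.2.2.1, hR₀]
      have hm : l.map e = t₀.2.val := by
        apply List.ext_get (by rw [hlen]; exact (List.length_map ..).trans hl)
        intro n h1 h2
        have hn : n < σ.ar R := by rw [hlen] at h2; exact h2
        obtain ⟨t₁, -, a₁, hg1, hl1⟩ := hproj ⟨n, hn⟩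
        replace hl1 := cons_inj2 hl1
        obtain ⟨h01, hv⟩ := hl1
        obtain rfl := Sum.inr_injective h01
        rw [List.getElem?_eq_getElem h2] at hg1
        simp only [Option.some.injEq] at hg1
        rw [hkey] at hv
        exact (List.getElem_map ..).trans ((Sum.inl_injective hv).trans hg1.symm)
      rw [hm, ← hR₀]
      exact t₀.2.2.1
    · intro hm
      have hl : l.length = σ.ar R := len_eq _ _ (I.wf R _ hm)
      refine ⟨hl, Sum.inr ⟨R, l.map e, hm, lt_of_not_ge h⟩, ⟨_, rfl, rfl⟩, ?_⟩
      intro i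
      refine ⟨⟨R, l.map e, hm, lt_of_not_ge h⟩, rfl, e (l.get (Fin.cast hl.symm i)), ?_, ?_⟩
      · have hi : (i : ℕ) < l.length := by omega
        erw [List.getElem?_map, List.getElem?_eq_getElem hi]
        rfl
      · erw [hkey (l.get (Fin.cast hl.symm i))]; rfl

lemma length_two {α : Type} {l : List α} (h : l.length = 2) : ∃ x y, l = [x, y] := by
  match l, h with
  | [x, y], _ => exact ⟨x, y, rfl⟩

lemma iso2 (J : Interp (sSig σ)) (wf : WellFormed J) (rf : RedundancyFree J) :
    Nonempty (InterpIso (shredInterp (unshred J)) J) := by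
  classical
  obtain ⟨wf1, wf2, wf3, wf4, wf5, wf6⟩ := wf
  have hex : ∀ t : HighTuple (unshred J), ∃ s : J.Dom,
      [s] ∈ J.rel (SRel.tag t.1 t.2.2.2) ∧
      ∀ i : Fin (σ.ar t.1),
        [s, (t.2.val.get (Fin.cast ((unshred J).wf _ _ t.2.2.1).symm i)).val]
          ∈ J.rel (SRel.proj t.1 t.2.2.2 i) := by
    intro t
    obtain ⟨hl, s, hs, hproj⟩ := (unshred_rel_high (not_le.mpr t.2.2.2) t.2.val).mp t.2.2.1
    exact ⟨s, hs, hproj⟩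
  set sOf : HighTuple (unshred J) → J.Dom := fun t => (hex t).choose with hsdef
  have hsOf : ∀ t, [sOf t] ∈ J.rel (SRel.tag t.1 t.2.2.2) ∧
      ∀ i : Fin (σ.ar t.1),
        [sOf t, (t.2.val.get (Fin.cast ((unshred J).wf _ _ t.2.2.1).symm i)).val]
          ∈ J.rel (SRel.proj t.1 t.2.2.2 i) := fun t => (hex t).choose_spec
  set e0 : (shredInterp (unshred J)).Dom → J.Dom := Sum.elim Subtype.val sOf with he0
  have hbij : Function.Bijective e0 := by
    constructor
    · rintro (x | t) (y | t') hxy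
      · exact congrArg Sum.inl (Subtype.ext hxy)
      · have hxy' : x.val = sOf t' := hxy
        exact absurd (hxy' ▸ x.2) (wf1 _ _ _ (hsOf t').1)
      · have hxy' : sOf t = y.val := hxy
        exact absurd (hxy'.symm ▸ y.2) (wf1 _ _ _ (hsOf t).1)
      · have hxy' : sOf t = sOf t' := hxy
        congr 1
        have h1 := (hsOf t).1
        rw [hxy'] at h1
        have hR : t.1 = t'.1 := wf2 _ _ _ _ _ h1 (hsOf t').1
        have hp := (hsOf t).2
        rw [hxy'] at hp
        obtain ⟨R₁, l₁⟩ := t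
        obtain ⟨R₁', l₁'⟩ := t'
        dsimp only at hR
        subst hR
        congr 1
        have hlen : l₁.val.length = σ.ar R₁ := (unshred J).wf _ _ l₁.2.1
        have hlen' : l₁'.val.length = σ.ar R₁ := (unshred J).wf _ _ l₁'.2.1
        apply Subtype.ext
        apply List.ext_get (by omega)
        intro n h1n h2n
        have hn : n < σ.ar R₁ := by omega
        obtain ⟨b, hb, hu⟩ := wf5 R₁ l₁'.2.2 (sOf ⟨R₁, l₁'⟩) (hsOf ⟨R₁, l₁'⟩).1 ⟨n, hn⟩
        have e1 := hu _ (hp ⟨n, hn⟩)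
        have e2 := hu _ ((hsOf ⟨R₁, l₁'⟩).2 ⟨n, hn⟩)
        apply Subtype.ext
        rw [show l₁.val.get ⟨n, h1n⟩ =
          l₁.val.get (Fin.cast ((unshred J).wf _ _ l₁.2.1).symm ⟨n, hn⟩) from rfl, e1]
        rw [show l₁'.val.get ⟨n, h2n⟩ =
          l₁'.val.get (Fin.cast ((unshred J).wf _ _ l₁'.2.1).symm ⟨n, hn⟩) from rfl, e2]
    · intro s
      rcases wf3 s with hs | ⟨R, hR, hs⟩
      · exact ⟨Sum.inl ⟨s, hs⟩, rfl⟩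
      · have hchoice : ∀ i : Fin (σ.ar R), ∃! b, [s, b] ∈ J.rel (SRel.proj R hR i) :=
          wf5 R hR s hs
        have hgspec : ∀ i, [s, (hchoice i).choose] ∈ J.rel (SRel.proj R hR i) :=
          fun i => (hchoice i).choose_spec.1
        have helt : ∀ i, [(hchoice i).choose] ∈ J.rel SRel.elt :=
          fun i => (wf4 R hR i s _ (hgspec i)).2
        set L : List (EltDom J) :=
          List.ofFn (fun i => (⟨(hchoice i).choose, helt i⟩ : EltDom J)) with hL
        have hLlen : L.length = σ.ar R := by exact List.length_ofFn
        have hLget : ∀ (i : Fin (σ.ar R)) (hi : (i : ℕ) < L.length),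
            L.get ⟨i, hi⟩ = ⟨(hchoice i).choose, helt i⟩ := by
          intro i hi
          have h2 : (i : ℕ) <
              (List.ofFn (fun j => (⟨(hchoice j).choose, helt j⟩ : EltDom J))).length := by
            simp
          have hg := List.get_ofFn (fun j => (⟨(hchoice j).choose, helt j⟩ : EltDom J)) ⟨i, h2⟩
          refine Eq.trans (by rfl) (hg.trans ?_)
          have hcast : Fin.cast (by simp) (⟨(i : ℕ), h2⟩ : Fin (List.ofFn
              (fun j => (⟨(hchoice j).choose, helt j⟩ : EltDom J))).length) = i := by
            apply Fin.ext; simp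
          rw [hcast]
        have hmem : L ∈ (unshred J).rel R := by
          rw [unshred_rel_high (not_le.mpr hR)]
          refine ⟨hLlen, s, hs, ?_⟩
          intro i
          have hi : (i : ℕ) < L.length := by omega
          rw [show Fin.cast hLlen.symm i = (⟨(i : ℕ), hi⟩ : Fin L.length) from rfl, hLget i hi]
          exact hgspec i
        refine ⟨Sum.inr ⟨R, L, hmem, hR⟩, ?_⟩
        show sOf ⟨R, L, hmem, hR⟩ = s
        apply rf R hR _ s (fun i => ((⟨R, L, hmem, hR⟩ : HighTuple (unshred J)).2.val.get
          (Fin.cast ((unshred J).wf _ _ hmem).symm i)).val)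
        intro i
        constructor
        · exact (hsOf ⟨R, L, hmem, hR⟩).2 i
        · have hi : (i : ℕ) < L.length := by omega
          rw [show Fin.cast ((unshred J).wf _ _ hmem).symm i = (⟨(i : ℕ), hi⟩ : Fin L.length)
            from rfl]
          erw [hLget i hi]
          exact hgspec i
  refine ⟨⟨Equiv.ofBijective e0 hbij, ?_⟩⟩
  have hcoe : ⇑(Equiv.ofBijective e0 hbij) = e0 := rfl
  intro r l
  rw [hcoe]
  cases r with
  | low R h =>
    constructor
    · rintro ⟨l₀, h₀, rfl⟩
      erw [unshred_rel_low h] at h₀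
      have : (l₀.map Sum.inl).map e0 = l₀.map Subtype.val := by
        erw [List.map_map]; rfl
      rw [this]
      exact h₀.2
    · intro hm
      have hinl : ∀ x ∈ l, ∃ y, x = Sum.inl y := by
        rintro (a | t) hx
        · exact ⟨a, rfl⟩
        · exfalso
          have helt : [e0 (Sum.inr t)] ∈ J.rel SRel.elt :=
            wf6 R h _ hm _ (List.mem_map_of_mem hx)
          exact wf1 _ _ _ (hsOf t).1 helt
      obtain ⟨l₀, rfl⟩ := exists_map_inl l hinl
      refine ⟨l₀, ?_, rfl⟩
      erw [unshred_rel_low h]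
      have hmm : (l₀.map Sum.inl).map e0 = l₀.map Subtype.val := by
        erw [List.map_map]; rfl
      rw [hmm] at hm
      refine ⟨len_eq _ _ (J.wf _ _ hm), hm⟩
  | elt =>
    constructor
    · rintro ⟨a, rfl⟩
      exact a.2
    · intro hm
      have hlen : l.length = 1 := len_eq _ _ (J.wf _ _ hm)
      obtain ⟨x, rfl⟩ := List.length_eq_one_iff.mp hlen
      cases x with
      | inl a => exact ⟨a, rfl⟩
      | inr t => exact absurd hm (wf1 _ _ _ (hsOf t).1)
  | tag R h =>
    constructor
    · rintro ⟨t, ht1, rfl⟩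
      subst ht1
      exact (hsOf t).1
    · intro hm
      have hlen : l.length = 1 := len_eq _ _ (J.wf _ _ hm)
      obtain ⟨x, rfl⟩ := List.length_eq_one_iff.mp hlen
      cases x with
      | inl a => exact absurd a.2 (wf1 _ _ _ hm)
      | inr t => exact ⟨t, wf2 _ _ _ _ _ (hsOf t).1 hm, rfl⟩
  | proj R h i =>
    constructor
    · rintro ⟨t, ht1, a, hga, rfl⟩
      obtain ⟨R₁, l₁⟩ := t
      dsimp only at ht1
      subst ht1
      have hlen : l₁.val.length = σ.ar R₁ := (unshred J).wf _ _ l₁.2.1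
      have hi : (i : ℕ) < l₁.val.length := by omega
      erw [List.getElem?_eq_getElem hi] at hga
      replace hga := Option.some_injective _ hga
      have := (hsOf ⟨R₁, l₁⟩).2 i
      subst hga
      exact this
    · intro hm
      have hlen : l.length = 2 := len_eq _ _ (J.wf _ _ hm)
      obtain ⟨x, y, rfl⟩ := length_two hlen
      have hm' : [e0 x, e0 y] ∈ J.rel (SRel.proj R h i) := hm
      have hxy := wf4 R h i _ _ hm'
      match x, y with
      | Sum.inl a, _ => exact absurd hxy.1 fun hh => wf1 _ _ _ hh a.2
      | Sum.inr t, Sum.inr t' => exact absurd hxy.2 (wf1 _ _ _ (hsOf t').1)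
      | Sum.inr t, Sum.inl b =>
        have ht1 : t.1 = R := wf2 _ _ _ _ _ (hsOf t).1 hxy.1
        obtain ⟨R₁, l₁⟩ := t
        dsimp only at ht1
        subst ht1
        have hlen1 : l₁.val.length = σ.ar R₁ := (unshred J).wf _ _ l₁.2.1
        have hi : (i : ℕ) < l₁.val.length := by omega
        obtain ⟨c, hc, hu⟩ := wf5 R₁ h (sOf ⟨R₁, l₁⟩) (hsOf ⟨R₁, l₁⟩).1 i
        have e1 := hu _ hm'
        have e2 := hu _ ((hsOf ⟨R₁, l₁⟩).2 i)
        refine ⟨⟨R₁, l₁⟩, rfl, b, ?_, rfl⟩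
        erw [List.getElem?_eq_getElem hi]
        congr 1
        apply Subtype.ext
        exact e2.trans e1.symm

end AuxShred

/-- the shredding operation is a bijection (up to isomorphism of
interpretations, with the unshredding operation as inverse) from σ-interpretations
to redundancy-free σs-interpretations satisfying `Wellformed(σs)`. -/
theorem shredding_bijection (σ : Sig) :
    (∀ I : Interp σ, WellFormed (shredInterp I) ∧ RedundancyFree (shredInterp I) ∧
      Nonempty (InterpIso (unshred (shredInterp I)) I)) ∧
    (∀ J : Interp (sSig σ), WellFormed J → RedundancyFree J →
      Nonempty (InterpIso (shredInterp (unshred J)) J)) := by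
  refine ⟨fun I => ⟨wf_shred I, rf_shred I, iso1 I⟩, fun J wf rf => iso2 J wf rf⟩
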